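/- For every n, all functions f, g : [n] → [n], and every permutation h of [n], d(f∘g, id) ≤ d(f, h) + d(g, h⁻¹), where d is the normalized Hamming distance between functions and id is the identity function. -/

import Mathlib

/-- Normalized Hamming distance between functions `[n] → [n]`. -/
noncomputable def nhdist {n : ℕ} {α : Type*} [DecidableEq α] (x y : Fin n → α) : ℝ :=
  (hammingDist x y : ℝ) / n

theorem key_card (n : ℕ) (f g : Fin n → Fin n) (h : Equiv.Perm (Fin n)) :
    hammingDist (fun i => f (g i)) id ≤ hammingDist f ⇑h + hammingDist g ⇑h.symm := by
  classical
  simp only [hammingDist]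
  have h2 : (Finset.univ.filter fun i => f (h.symm i) ≠ i).card
      = (Finset.univ.filter fun j => f j ≠ h j).card := by
    apply Finset.card_bij (fun i _ => h.symm i)
    · intro i hi
      simp only [Finset.mem_filter, Finset.mem_univ, true_and] at hi ⊢
      simpa using hi
    · intro a ha b hb hab
      exact h.symm.injective hab
    · intro j hj
      refine ⟨h j, ?_, by simp⟩
      simp only [Finset.mem_filter, Finset.mem_univ, true_and] at hj ⊢
      simpa using hj
  calc (Finset.univ.filter fun i => f (g i) ≠ id i).card
      ≤ ((Finset.univ.filter fun i => f (h.symm i) ≠ i) ∪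
         (Finset.univ.filter fun i => g i ≠ h.symm i)).card := by
        apply Finset.card_le_card
        intro i hi
        simp only [Finset.mem_filter, Finset.mem_univ, true_and, Finset.mem_union,
          id_eq] at hi ⊢
        by_contra hc
        push_neg at hc
        obtain ⟨h1, h2⟩ := hc
        rw [h2] at hi
        exact hi h1
    _ ≤ (Finset.univ.filter fun i => f (h.symm i) ≠ i).card
        + (Finset.univ.filter fun i => g i ≠ h.symm i).card := Finset.card_union_le _ _
    _ = _ := by rw [h2]

theorem dist_comp_id_le (n : ℕ) (f g : Fin n → Fin n) (h : Equiv.Perm (Fin n)) :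
    nhdist (fun i => f (g i)) id ≤ nhdist f ⇑h + nhdist g ⇑h.symm := by
  unfold nhdist
  rw [← add_div]
  gcongr
  exact_mod_cast key_card n f g h
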